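/- Let n ≥ 2 and let A, B be n×n real symmetric matrices with min{rank(A), rank(B)} ≤ 2. Then the pair (A,B) satisfies the weak interlacing property: inf E(A,B) ≤ inf O(A,B) and sup E(A,B) ≥ sup O(A,B). -/

import Mathlib

open Matrix

noncomputable def frobNorm {n : ℕ} (M : Matrix (Fin n) (Fin n) ℝ) : ℝ :=
  Real.sqrt (Mᵀ * M).trace

def Eset {n : ℕ} (A B : Matrix (Fin n) (Fin n) ℝ) : Set ℝ :=
  {t | ∃ U : Matrix (Fin n) (Fin n) ℝ, Uᵀ = U ∧ frobNorm U = 1 ∧ t = (A * U * B * U).trace}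

def Oset {n : ℕ} (A B : Matrix (Fin n) (Fin n) ℝ) : Set ℝ :=
  {t | ∃ W : Matrix (Fin n) (Fin n) ℝ, Wᵀ = -W ∧ frobNorm W = 1 ∧ t = (A * W * B * Wᵀ).trace}

variable {n : ℕ}

lemma trace_vecMulVec (a b : Fin n → ℝ) : (vecMulVec a b).trace = a ⬝ᵥ b := by
  simp [Matrix.trace, Matrix.diag, vecMulVec_apply, dotProduct]

lemma mul_vecMulVec (M : Matrix (Fin n) (Fin n) ℝ) (a b : Fin n → ℝ) :
    M * vecMulVec a b = vecMulVec (M *ᵥ a) b := by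
  ext i j
  simp [Matrix.mul_apply, vecMulVec_apply, Matrix.mulVec, dotProduct, Finset.sum_mul, mul_assoc]

lemma vecMulVec_mul (M : Matrix (Fin n) (Fin n) ℝ) (a b : Fin n → ℝ) :
    vecMulVec a b * M = vecMulVec a (b ᵥ* M) := by
  ext i j
  simp [Matrix.mul_apply, vecMulVec_apply, Matrix.vecMul, dotProduct, Finset.mul_sum, mul_assoc]

lemma vecMulVec_mul_vecMulVec (a b c d : Fin n → ℝ) :
    vecMulVec a b * vecMulVec c d = (b ⬝ᵥ c) • vecMulVec a d := by
  ext i j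
  simp [Matrix.mul_apply, vecMulVec_apply, dotProduct, Finset.sum_mul, Finset.mul_sum]
  ring_nf
  exact Finset.sum_congr rfl fun k _ => by ring

lemma vecMulVec_transpose' (a b : Fin n → ℝ) : (vecMulVec a b)ᵀ = vecMulVec b a := by
  ext i j; simp [vecMulVec_apply, mul_comm]

lemma vecMulVec_mulVec (a b c : Fin n → ℝ) :
    vecMulVec a b *ᵥ c = (b ⬝ᵥ c) • a := by
  ext i
  simp [vecMulVec_apply, Matrix.mulVec, dotProduct, Finset.sum_mul, Finset.mul_sum]
  ring_nf

lemma vecMul_eq (M : Matrix (Fin n) (Fin n) ℝ) (v : Fin n → ℝ) :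
    v ᵥ* M = Mᵀ *ᵥ v := by
  ext j; simp [Matrix.vecMul, Matrix.mulVec, dotProduct, mul_comm]

lemma traceTM (M : Matrix (Fin n) (Fin n) ℝ) : (Mᵀ * M).trace = ∑ j, ∑ i, (M i j)^2 := by
  simp [Matrix.trace, Matrix.diag, Matrix.mul_apply, sq]

lemma traceTM_nonneg (M : Matrix (Fin n) (Fin n) ℝ) : 0 ≤ (Mᵀ * M).trace := by
  rw [traceTM]
  exact Finset.sum_nonneg fun j _ => Finset.sum_nonneg fun i _ => sq_nonneg _

lemma frobNorm_eq_one_iff (M : Matrix (Fin n) (Fin n) ℝ) :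
    frobNorm M = 1 ↔ (Mᵀ * M).trace = 1 := by
  rw [frobNorm, Real.sqrt_eq_one]

lemma traceTM_eq_zero_iff (M : Matrix (Fin n) (Fin n) ℝ) :
    (Mᵀ * M).trace = 0 ↔ M = 0 := by
  rw [traceTM]
  constructor
  · intro h
    ext i j
    have h2 : ∀ j' ∈ Finset.univ, (0:ℝ) ≤ ∑ i', (M i' j')^2 :=
      fun j' _ => Finset.sum_nonneg fun i' _ => sq_nonneg _
    have h3 := (Finset.sum_eq_zero_iff_of_nonneg h2).mp h j (Finset.mem_univ j)
    have h4 := (Finset.sum_eq_zero_iff_of_nonneg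
      (fun i' _ => sq_nonneg (M i' j))).mp h3 i (Finset.mem_univ i)
    simpa [sq] using pow_eq_zero_iff (n := 2) (by norm_num) |>.mp h4
  · intro h; simp [h]

lemma core_subset (A B : Matrix (Fin n) (Fin n) ℝ) (hA : Aᵀ = A)
    (v w : Fin n → ℝ) (a b : ℝ) (hvv : v ⬝ᵥ v = 1) (hww : w ⬝ᵥ w = 1) (hvw : v ⬝ᵥ w = 0)
    (hBd : B = a • vecMulVec v v + b • vecMulVec w w) :
    Oset A B ⊆ Eset A B := by
  rintro t ⟨W, hW, hWn, rfl⟩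
  rw [frobNorm_eq_one_iff] at hWn
  set x : Fin n → ℝ := W *ᵥ v with hxdef
  set y : Fin n → ℝ := W *ᵥ w with hydef
  set α : ℝ := w ⬝ᵥ x with hαdef
  have key : ∀ u c : Fin n → ℝ, u ⬝ᵥ (W *ᵥ c) = -(c ⬝ᵥ (W *ᵥ u)) := by
    intro u c
    rw [Matrix.dotProduct_mulVec, _root_.vecMul_eq, hW, Matrix.neg_mulVec, neg_dotProduct,
      dotProduct_comm]
  have hwv : w ⬝ᵥ v = 0 := by rw [dotProduct_comm]; exact hvw
  have hvx : v ⬝ᵥ x = 0 := by have := key v v; rw [hxdef]; linarith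
  have hxv : x ⬝ᵥ v = 0 := by rw [dotProduct_comm]; exact hvx
  have hwy : w ⬝ᵥ y = 0 := by have := key w w; rw [hydef]; linarith
  have hyw : y ⬝ᵥ w = 0 := by rw [dotProduct_comm]; exact hwy
  have hwx : w ⬝ᵥ x = α := rfl
  have hxw : x ⬝ᵥ w = α := by rw [dotProduct_comm]
  have hvy : v ⬝ᵥ y = -α := by rw [hydef, key v w]
  have hyv : y ⬝ᵥ v = -α := by rw [dotProduct_comm]; exact hvy
  set x' : Fin n → ℝ := x - α • w with hx'def
  set y' : Fin n → ℝ := y + α • v with hy'def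
  have hx'v : x' ⬝ᵥ v = 0 := by
    rw [hx'def, sub_dotProduct, smul_dotProduct, hxv, hwv]; simp
  have hvx' : v ⬝ᵥ x' = 0 := by rw [dotProduct_comm]; exact hx'v
  have hx'w : x' ⬝ᵥ w = 0 := by
    rw [hx'def, sub_dotProduct, smul_dotProduct, hxw, hww]; simp
  have hwx' : w ⬝ᵥ x' = 0 := by rw [dotProduct_comm]; exact hx'w
  have hy'v : y' ⬝ᵥ v = 0 := by
    rw [hy'def, add_dotProduct, smul_dotProduct, hyv, hvv]; simp
  have hvy' : v ⬝ᵥ y' = 0 := by rw [dotProduct_comm]; exact hy'v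
  have hy'w : y' ⬝ᵥ w = 0 := by
    rw [hy'def, add_dotProduct, smul_dotProduct, hyw, hvw]; simp
  have hwy' : w ⬝ᵥ y' = 0 := by rw [dotProduct_comm]; exact hy'w
  set U0 : Matrix (Fin n) (Fin n) ℝ :=
    vecMulVec x' v + vecMulVec v x' - vecMulVec y' w - vecMulVec w y'
      + α • (vecMulVec v w + vecMulVec w v) with hU0def
  set P : Matrix (Fin n) (Fin n) ℝ := vecMulVec v v + vecMulVec w w with hPdef
  set Z : Matrix (Fin n) (Fin n) ℝ := (1 - P) * W * (1 - P) with hZdef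
  set s : ℝ := (Zᵀ * Z).trace with hsdef
  set q : ℝ := ((Z * Zᵀ)ᵀ * (Z * Zᵀ)).trace with hqdef
  set V : Matrix (Fin n) (Fin n) ℝ := Real.sqrt (s / q) • (Z * Zᵀ) with hVdef
  set U : Matrix (Fin n) (Fin n) ℝ := U0 + V with hUdef
  have hPT : Pᵀ = P := by
    rw [hPdef, transpose_add, _root_.vecMulVec_transpose', _root_.vecMulVec_transpose']
  have hU0T : U0ᵀ = U0 := by
    rw [hU0def]
    simp only [transpose_add, transpose_sub, transpose_smul, _root_.vecMulVec_transpose']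
    abel
  have hVT : Vᵀ = V := by
    rw [hVdef, transpose_smul, transpose_mul, transpose_transpose]
  have hUT : Uᵀ = U := by rw [hUdef, transpose_add, hU0T, hVT]
  have hPv : P *ᵥ v = v := by
    rw [hPdef, add_mulVec, _root_.vecMulVec_mulVec, _root_.vecMulVec_mulVec, hvv, hwv]
    simp
  have hPw : P *ᵥ w = w := by
    rw [hPdef, add_mulVec, _root_.vecMulVec_mulVec, _root_.vecMulVec_mulVec, hvw, hww]
    simp
  have hZv : Z *ᵥ v = 0 := by
    rw [hZdef, ← Matrix.mulVec_mulVec, Matrix.sub_mulVec, Matrix.one_mulVec, hPv]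
    simp
  have hZw : Z *ᵥ w = 0 := by
    rw [hZdef, ← Matrix.mulVec_mulVec, Matrix.sub_mulVec, Matrix.one_mulVec, hPw]
    simp
  have hZT : Zᵀ = (1 - P) * Wᵀ * (1 - P) := by
    rw [hZdef, transpose_mul, transpose_mul, transpose_sub, transpose_one, hPT,
      Matrix.mul_assoc]
  have hZTv : Zᵀ *ᵥ v = 0 := by
    rw [hZT, ← Matrix.mulVec_mulVec, Matrix.sub_mulVec, Matrix.one_mulVec, hPv]
    simp
  have hZTw : Zᵀ *ᵥ w = 0 := by
    rw [hZT, ← Matrix.mulVec_mulVec, Matrix.sub_mulVec, Matrix.one_mulVec, hPw]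
    simp
  have hVv : V *ᵥ v = 0 := by
    rw [hVdef, Matrix.smul_mulVec, ← Matrix.mulVec_mulVec, hZTv]
    simp
  have hVw : V *ᵥ w = 0 := by
    rw [hVdef, Matrix.smul_mulVec, ← Matrix.mulVec_mulVec, hZTw]
    simp
  have hUv : U *ᵥ v = x := by
    rw [hUdef, Matrix.add_mulVec, hVv, hU0def]
    simp only [Matrix.add_mulVec, Matrix.sub_mulVec, Matrix.smul_mulVec,
      _root_.vecMulVec_mulVec, hvv, hwv, hx'v, hy'v]
    rw [hx'def]
    module
  have hUw : U *ᵥ w = -y := by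
    rw [hUdef, Matrix.add_mulVec, hVw, hU0def]
    simp only [Matrix.add_mulVec, Matrix.sub_mulVec, Matrix.smul_mulVec,
      _root_.vecMulVec_mulVec, hvw, hww, hx'w, hy'w]
    rw [hy'def]
    module
  have hval : (A * U * B * U).trace = (A * W * B * Wᵀ).trace := by
    rw [hBd]
    simp only [Matrix.mul_add, Matrix.add_mul, Matrix.mul_smul, Matrix.smul_mul,
      trace_add, trace_smul, _root_.mul_vecMulVec, _root_.vecMulVec_mul, _root_.trace_vecMulVec,
      _root_.vecMul_eq, transpose_transpose, hUT, ← Matrix.mulVec_mulVec, hUv, hUw,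
      Matrix.mulVec_neg, dotProduct_neg, neg_dotProduct, neg_neg]
    rfl
  have hsnn : 0 ≤ s := traceTM_nonneg Z
  have hqnn : 0 ≤ q := traceTM_nonneg _
  have hMT : (Z * Zᵀ)ᵀ = Z * Zᵀ := by rw [transpose_mul, transpose_transpose]
  have hVV : (V * V).trace = s := by
    by_cases hZ0 : Z = 0
    · have hs0 : s = 0 := by rw [hsdef, hZ0]; simp
      rw [hVdef, hZ0]; simp [hs0]
    · have hq0 : q ≠ 0 := by
        rw [hqdef]
        intro h
        have hM0 : Z * Zᵀ = 0 := (traceTM_eq_zero_iff _).mp h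
        have h2 : (Zᵀᵀ * Zᵀ).trace = 0 := by rw [transpose_transpose, hM0, trace_zero]
        have h3 : Zᵀ = 0 := (traceTM_eq_zero_iff Zᵀ).mp h2
        exact hZ0 (by simpa using congrArg transpose h3)
      rw [hVdef, Matrix.smul_mul, Matrix.mul_smul, trace_smul, trace_smul,
        smul_eq_mul, smul_eq_mul]
      have ht : ((Z * Zᵀ) * (Z * Zᵀ)).trace = q := by rw [hqdef, hMT]
      rw [ht, ← mul_assoc, Real.mul_self_sqrt (div_nonneg hsnn hqnn),
        div_mul_cancel₀ _ hq0]
  have hvV : v ᵥ* V = 0 := by rw [_root_.vecMul_eq, hVT, hVv]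
  have hwV : w ᵥ* V = 0 := by rw [_root_.vecMul_eq, hVT, hVw]
  have hU0V : (U0 * V).trace = 0 := by
    have t1 : (vecMulVec x' v * V).trace = 0 := by
      rw [_root_.vecMulVec_mul, hvV, _root_.trace_vecMulVec, dotProduct_zero]
    have t2 : (vecMulVec v x' * V).trace = 0 := by
      rw [trace_mul_comm, _root_.mul_vecMulVec, hVv, _root_.trace_vecMulVec, zero_dotProduct]
    have t3 : (vecMulVec y' w * V).trace = 0 := by
      rw [_root_.vecMulVec_mul, hwV, _root_.trace_vecMulVec, dotProduct_zero]
    have t4 : (vecMulVec w y' * V).trace = 0 := by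
      rw [trace_mul_comm, _root_.mul_vecMulVec, hVw, _root_.trace_vecMulVec, zero_dotProduct]
    have t5 : (vecMulVec v w * V).trace = 0 := by
      rw [_root_.vecMulVec_mul, hwV, _root_.trace_vecMulVec, dotProduct_zero]
    have t6 : (vecMulVec w v * V).trace = 0 := by
      rw [_root_.vecMulVec_mul, hvV, _root_.trace_vecMulVec, dotProduct_zero]
    rw [hU0def]
    simp only [Matrix.add_mul, Matrix.sub_mul, Matrix.smul_mul, trace_add, trace_sub,
      trace_smul, t1, t2, t3, t4, t5, t6]
    simp
  have hU0U0 : (U0 * U0).trace = 2*(x' ⬝ᵥ x') + 2*(y' ⬝ᵥ y') + 2*α^2 := by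
    rw [hU0def]
    simp only [Matrix.add_mul, Matrix.sub_mul, Matrix.smul_mul, Matrix.mul_add,
      Matrix.mul_sub, Matrix.mul_smul, trace_add, trace_sub, trace_smul,
      _root_.vecMulVec_mul_vecMulVec, _root_.trace_vecMulVec, smul_eq_mul, trace_smul,
      hvv, hww, hvw, hwv, hx'v, hvx', hx'w, hwx', hy'v, hvy', hy'w, hwy',
      smul_smul, zero_mul, mul_zero, one_mul, mul_one, zero_smul, smul_zero,
      Matrix.smul_apply, trace_zero]
    ring_nf
  have hx'x' : x' ⬝ᵥ x' = x ⬝ᵥ x - α^2 := by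
    rw [hx'def]
    simp only [sub_dotProduct, dotProduct_sub, smul_dotProduct, dotProduct_smul,
      hxw, hwx, hww, smul_eq_mul]
    ring
  have hy'y' : y' ⬝ᵥ y' = y ⬝ᵥ y - α^2 := by
    rw [hy'def]
    simp only [add_dotProduct, dotProduct_add, smul_dotProduct, dotProduct_smul,
      hvy, hyv, hvv, smul_eq_mul]
    ring
  have hsid : s = (Wᵀ * W).trace - 2*(x ⬝ᵥ x) - 2*(y ⬝ᵥ y) + 2*α^2 := by
    have f1 : v ⬝ᵥ W *ᵥ v = 0 := hvx
    have f2 : (W *ᵥ v) ⬝ᵥ v = 0 := hxv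
    have f3 : w ⬝ᵥ W *ᵥ w = 0 := hwy
    have f4 : (W *ᵥ w) ⬝ᵥ w = 0 := hyw
    have f5 : v ⬝ᵥ W *ᵥ w = -(w ⬝ᵥ W *ᵥ v) := hvy
    have f6 : (W *ᵥ w) ⬝ᵥ v = -(w ⬝ᵥ W *ᵥ v) := hyv
    have f7 : (W *ᵥ v) ⬝ᵥ w = w ⬝ᵥ W *ᵥ v := dotProduct_comm _ _
    have g2 : v ⬝ᵥ W *ᵥ W *ᵥ v = -((W *ᵥ v) ⬝ᵥ (W *ᵥ v)) := key v (W *ᵥ v)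
    have g1 : W *ᵥ W *ᵥ v ⬝ᵥ v = -((W *ᵥ v) ⬝ᵥ (W *ᵥ v)) := by
      rw [dotProduct_comm]; exact g2
    have g4 : w ⬝ᵥ W *ᵥ W *ᵥ w = -((W *ᵥ w) ⬝ᵥ (W *ᵥ w)) := key w (W *ᵥ w)
    have g3 : W *ᵥ W *ᵥ w ⬝ᵥ w = -((W *ᵥ w) ⬝ᵥ (W *ᵥ w)) := by
      rw [dotProduct_comm]; exact g4
    rw [hsdef, hZT, hZdef, hPdef, hαdef, hxdef, hydef]
    simp only [Matrix.sub_mul, Matrix.mul_sub, Matrix.one_mul, Matrix.mul_one,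
      Matrix.add_mul, Matrix.mul_add, trace_add, trace_sub,
      _root_.mul_vecMulVec, _root_.vecMulVec_mul, _root_.vecMulVec_mul_vecMulVec, _root_.vecMulVec_mulVec,
      _root_.trace_vecMulVec, trace_smul, smul_eq_mul,
      _root_.vecMul_eq, transpose_transpose, transpose_mul, hW, Matrix.neg_mulVec,
      Matrix.neg_mul, Matrix.mul_neg, trace_neg, neg_dotProduct, dotProduct_neg,
      neg_neg, smul_dotProduct, dotProduct_smul, neg_smul, smul_neg,
      Matrix.mulVec_neg, Matrix.mulVec_smul, Matrix.mulVec_zero, zero_smul,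
      smul_zero, zero_dotProduct, dotProduct_zero,
      ← Matrix.mulVec_mulVec,
      f1, f2, f3, f4, f5, f6, f7, g1, g2, g3, g4, hvv, hww, hvw, hwv]
    ring_nf
  have hnorm : (Uᵀ * U).trace = 1 := by
    rw [hUT, hUdef]
    simp only [Matrix.add_mul, Matrix.mul_add, trace_add]
    rw [hU0U0, hU0V, hVV, trace_mul_comm V U0, hU0V]
    rw [hx'x', hy'y']
    have : s = (Wᵀ * W).trace - 2*(x ⬝ᵥ x) - 2*(y ⬝ᵥ y) + 2*α^2 := hsid
    linarith [hWn]
  exact ⟨U, hUT, (frobNorm_eq_one_iff U).mpr hnorm, hval.symm⟩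

lemma sym_rank_two_decomp (hn : 2 ≤ n) (B : Matrix (Fin n) (Fin n) ℝ) (hB : Bᵀ = B)
    (hr : B.rank ≤ 2) :
    ∃ (v w : Fin n → ℝ) (a b : ℝ), v ⬝ᵥ v = 1 ∧ w ⬝ᵥ w = 1 ∧ v ⬝ᵥ w = 0 ∧
      B = a • vecMulVec v v + b • vecMulVec w w := by
  have hH : B.IsHermitian := by
    rw [Matrix.IsHermitian, conjTranspose_eq_transpose_of_trivial, hB]
  set Q : Matrix (Fin n) (Fin n) ℝ := (hH.eigenvectorUnitary : Matrix (Fin n) (Fin n) ℝ) with hQdef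
  set d : Fin n → ℝ := hH.eigenvalues with hddef
  have hQorth : Qᵀ * Q = 1 := by
    have := Unitary.coe_star_mul_self hH.eigenvectorUnitary
    rwa [Matrix.star_eq_conjTranspose, conjTranspose_eq_transpose_of_trivial] at this
  have hdot : ∀ i j, (fun r => Q r i) ⬝ᵥ (fun r => Q r j) = (1 : Matrix (Fin n) (Fin n) ℝ) i j := by
    intro i j
    rw [← hQorth]
    simp [Matrix.mul_apply, dotProduct]
  have key : B = ∑ k, d k • vecMulVec (fun r => Q r k) (fun r => Q r k) := by
    conv_lhs => rw [hH.spectral_theorem, Unitary.conjStarAlgAut_apply]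
    rw [Matrix.star_eq_conjTranspose, conjTranspose_eq_transpose_of_trivial]
    ext i j
    simp only [Matrix.mul_apply, Matrix.sum_apply, Matrix.smul_apply, vecMulVec_apply,
      Matrix.diagonal_apply, Matrix.transpose_apply, smul_eq_mul]
    refine Finset.sum_congr rfl fun k _ => ?_
    rw [Finset.sum_eq_single k (fun b _ hb => by simp [hb]) (by simp)]
    simp [hQdef, Matrix.IsHermitian.eigenvectorUnitary_apply]
    ring
  -- support
  set S : Finset (Fin n) := Finset.univ.filter (fun k => d k ≠ 0) with hSdef
  have hcard : S.card ≤ 2 := by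
    have h1 : B.rank = Fintype.card {i // d i ≠ 0} := hH.rank_eq_card_non_zero_eigs
    have h2 : Fintype.card {i // d i ≠ 0} = S.card := Fintype.card_subtype _
    omega
  obtain ⟨T, hST, hT2⟩ := Finset.exists_superset_card_eq hcard (by simpa using hn)
  obtain ⟨i, j, hij, hTij⟩ := Finset.card_eq_two.mp hT2
  refine ⟨fun r => Q r i, fun r => Q r j, d i, d j, ?_, ?_, ?_, ?_⟩
  · rw [hdot]; simp
  · rw [hdot]; simp
  · rw [hdot]; simp [Matrix.one_apply, hij]
  · rw [key]
    rw [← Finset.sum_subset (Finset.subset_univ T) (fun k _ hk => by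
      have : d k = 0 := by
        by_contra h
        exact hk (hST (by simp [hSdef, h]))
      simp [this])]
    rw [hTij, Finset.sum_pair hij]

lemma entry_le_one (U : Matrix (Fin n) (Fin n) ℝ) (hU : (Uᵀ * U).trace = 1) (i j : Fin n) :
    |U i j| ≤ 1 := by
  rw [traceTM] at hU
  have h1 : (U i j)^2 ≤ ∑ j', ∑ i', (U i' j')^2 := by
    calc (U i j)^2 ≤ ∑ i', (U i' j)^2 :=
          Finset.single_le_sum (fun k _ => sq_nonneg (U k j)) (Finset.mem_univ i)
      _ ≤ ∑ j', ∑ i', (U i' j')^2 :=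
          Finset.single_le_sum (fun k _ => Finset.sum_nonneg fun l _ => sq_nonneg (U l k))
            (Finset.mem_univ j)
  rw [hU] at h1
  nlinarith [abs_nonneg (U i j), sq_abs (U i j)]

lemma trace_bound (A B U : Matrix (Fin n) (Fin n) ℝ) (hU : (Uᵀ * U).trace = 1) :
    |(A * U * B * U).trace| ≤ (∑ i, ∑ j, |A i j|) * (∑ i, ∑ j, |B i j|) := by
  have hUe := entry_le_one U hU
  have step2 : ∀ i j, |(A * U * B) i j| ≤ ∑ y, ∑ z, |A i z| * |B y j| := by
    intro i j
    calc |(A * U * B) i j| = |∑ y, (∑ z, A i z * U z y) * B y j| := by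
          simp [Matrix.mul_apply]
      _ ≤ ∑ y, |(∑ z, A i z * U z y) * B y j| := Finset.abs_sum_le_sum_abs _ _
      _ ≤ ∑ y, ∑ z, |A i z| * |B y j| := by
          refine Finset.sum_le_sum fun y _ => ?_
          rw [abs_mul]
          calc |∑ z, A i z * U z y| * |B y j| ≤ (∑ z, |A i z|) * |B y j| := by
                refine mul_le_mul_of_nonneg_right ?_ (abs_nonneg _)
                calc |∑ z, A i z * U z y| ≤ ∑ z, |A i z * U z y| :=
                      Finset.abs_sum_le_sum_abs _ _
                  _ ≤ ∑ z, |A i z| := by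
                      refine Finset.sum_le_sum fun z _ => ?_
                      rw [abs_mul]
                      calc |A i z| * |U z y| ≤ |A i z| * 1 :=
                            mul_le_mul_of_nonneg_left (hUe z y) (abs_nonneg _)
                        _ = |A i z| := mul_one _
            _ = ∑ z, |A i z| * |B y j| := by rw [Finset.sum_mul]
  calc |(A * U * B * U).trace| = |∑ i, ∑ j, (A * U * B) i j * U j i| := by
        simp [Matrix.trace, Matrix.diag, Matrix.mul_apply]
    _ ≤ ∑ i, ∑ j, |(A * U * B) i j * U j i| := by
        calc |∑ i, ∑ j, (A * U * B) i j * U j i| ≤ ∑ i, |∑ j, (A * U * B) i j * U j i| :=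
              Finset.abs_sum_le_sum_abs _ _
          _ ≤ ∑ i, ∑ j, |(A * U * B) i j * U j i| :=
              Finset.sum_le_sum fun i _ => Finset.abs_sum_le_sum_abs _ _
    _ ≤ ∑ i, ∑ j, ∑ y, ∑ z, |A i z| * |B y j| := by
        refine Finset.sum_le_sum fun i _ => Finset.sum_le_sum fun j _ => ?_
        rw [abs_mul]
        calc |(A * U * B) i j| * |U j i| ≤ |(A * U * B) i j| * 1 :=
              mul_le_mul_of_nonneg_left (hUe j i) (abs_nonneg _)
          _ = |(A * U * B) i j| := mul_one _
          _ ≤ ∑ y, ∑ z, |A i z| * |B y j| := step2 i j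
    _ = (∑ i, ∑ j, |A i j|) * (∑ i, ∑ j, |B i j|) := by
        simp only [← Finset.sum_mul, ← Finset.mul_sum]
        rw [Finset.sum_comm (γ := Fin n) (s := Finset.univ) (t := Finset.univ)
          (f := fun i j => |B j i|)]

lemma Oset_nonempty (hn : 2 ≤ n) (A B : Matrix (Fin n) (Fin n) ℝ) :
    (Oset A B).Nonempty := by
  have h0 : (0 : ℕ) < n := by omega
  have h1 : (1 : ℕ) < n := by omega
  set i0 : Fin n := ⟨0, h0⟩
  set i1 : Fin n := ⟨1, h1⟩
  have hne : i0 ≠ i1 := by simp [i0, i1, Fin.ext_iff]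
  set W : Matrix (Fin n) (Fin n) ℝ :=
    (Real.sqrt 2)⁻¹ • (Matrix.single i0 i1 1 - Matrix.single i1 i0 1) with hWdef
  have hc : ((Real.sqrt 2)⁻¹) * ((Real.sqrt 2)⁻¹) = 2⁻¹ := by
    rw [← Real.sqrt_inv, Real.mul_self_sqrt (by norm_num)]
  have hskew : Wᵀ = -W := by
    rw [hWdef]
    ext i j
    simp only [Matrix.transpose_apply, Matrix.smul_apply, Matrix.sub_apply,
      Matrix.neg_apply, Matrix.single, Matrix.of_apply]
    rcases Classical.em (i0 = j ∧ i1 = i) with h1 | h1 <;>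
      rcases Classical.em (i1 = j ∧ i0 = i) with h2 | h2
    · exact absurd (h1.1.trans h2.1.symm) hne
    · obtain ⟨e1, e2⟩ := h1
      have hji : ¬(j = i) := by rw [← e1, ← e2]; exact hne
      have hij : ¬(i = j) := fun h => hji h.symm
      simp [← e1, ← e2, hji, hij, hne, fun h : i1 = i0 => hne h.symm]
    · obtain ⟨e1, e2⟩ := h2
      have hji : ¬(j = i) := by rw [← e1, ← e2]; exact fun h => hne h.symm
      have hij : ¬(i = j) := fun h => hji h.symm
      simp [← e1, ← e2, hji, hij, hne, fun h : i1 = i0 => hne h.symm]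
    · have h1' : ¬(i0 = i ∧ i1 = j) := fun h => h2 ⟨h.2, h.1⟩
      have h2' : ¬(i1 = i ∧ i0 = j) := fun h => h1 ⟨h.2, h.1⟩
      simp [h1, h2, h1', h2']
  have hnorm : frobNorm W = 1 := by
    rw [frobNorm_eq_one_iff, traceTM]
    have hentry : ∀ i j, (W i j)^2
        = 2⁻¹ * ((if i0 = i ∧ i1 = j then 1 else 0) + (if i1 = i ∧ i0 = j then 1 else 0)) := by
      intro i j
      rw [hWdef]
      simp only [Matrix.smul_apply, Matrix.sub_apply, Matrix.single, Matrix.of_apply]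
      rcases Classical.em (i0 = i ∧ i1 = j) with h1 | h1 <;>
        rcases Classical.em (i1 = i ∧ i0 = j) with h2 | h2
      · exact absurd (h1.1.trans h2.1.symm) hne
      · obtain ⟨e1, e2⟩ := h1
        have hji : ¬(j = i) := by rw [← e1, ← e2]; exact fun h => hne h.symm
        have hij : ¬(i = j) := fun h => hji h.symm
        simp [← e1, ← e2, hji, hij, hne, sq, fun h : i1 = i0 => hne h.symm]
        linarith [hc]
      · obtain ⟨e1, e2⟩ := h2
        have hji : ¬(j = i) := by rw [← e1, ← e2]; exact hne
        have hij : ¬(i = j) := fun h => hji h.symm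
        simp [← e1, ← e2, hji, hij, hne, sq, fun h : i1 = i0 => hne h.symm]
        linarith [hc]
      · simp [h1, h2]
    simp only [hentry]
    simp only [← Finset.mul_sum]
    rw [Finset.sum_comm]
    simp [Finset.sum_add_distrib, ite_and, Finset.sum_ite_eq, Finset.sum_ite_eq']
    norm_num
  exact ⟨(A * W * B * Wᵀ).trace, W, hskew, hnorm, rfl⟩

lemma frobNorm_transpose (M : Matrix (Fin n) (Fin n) ℝ) : frobNorm Mᵀ = frobNorm M := by
  rw [frobNorm, frobNorm, transpose_transpose, trace_mul_comm]

lemma Eset_comm (A B : Matrix (Fin n) (Fin n) ℝ) : Eset A B = Eset B A := by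
  have key : ∀ (A B : Matrix (Fin n) (Fin n) ℝ), Eset A B ⊆ Eset B A := by
    rintro A B t ⟨U, hU, hUn, rfl⟩
    refine ⟨U, hU, hUn, ?_⟩
    rw [Matrix.mul_assoc (A * U) B U, trace_mul_comm, ← Matrix.mul_assoc]
  exact le_antisymm (key A B) (key B A)

lemma Oset_comm (A B : Matrix (Fin n) (Fin n) ℝ) : Oset A B = Oset B A := by
  have key : ∀ (A B : Matrix (Fin n) (Fin n) ℝ), Oset A B ⊆ Oset B A := by
    rintro A B t ⟨W, hW, hWn, rfl⟩
    refine ⟨Wᵀ, ?_, by rw [frobNorm_transpose]; exact hWn, ?_⟩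
    · rw [transpose_transpose, hW, neg_neg]
    · rw [transpose_transpose, Matrix.mul_assoc (A * W) B Wᵀ, trace_mul_comm,
        ← Matrix.mul_assoc]
  exact le_antisymm (key A B) (key B A)


theorem stmt_5 (n : ℕ) (hn : 2 ≤ n) (A B : Matrix (Fin n) (Fin n) ℝ)
    (hA : Aᵀ = A) (hB : Bᵀ = B) (hrank : min A.rank B.rank ≤ 2) :
    sInf (Eset A B) ≤ sInf (Oset A B) ∧ sSup (Oset A B) ≤ sSup (Eset A B) := by
  have hsub : Oset A B ⊆ Eset A B := by
    rcases min_le_iff.mp hrank with h | h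
    · obtain ⟨v, w, a, b, hvv, hww, hvw, hdec⟩ := sym_rank_two_decomp hn A hA h
      rw [Oset_comm, Eset_comm]
      exact core_subset B A hB v w a b hvv hww hvw hdec
    · obtain ⟨v, w, a, b, hvv, hww, hvw, hdec⟩ := sym_rank_two_decomp hn B hB h
      exact core_subset A B hA v w a b hvv hww hvw hdec
  have hne : (Oset A B).Nonempty := Oset_nonempty hn A B
  set c : ℝ := (∑ i, ∑ j, |A i j|) * (∑ i, ∑ j, |B i j|) with hcdef
  have hbdd : ∀ t ∈ Eset A B, |t| ≤ c := by
    rintro t ⟨U, hU, hUn, rfl⟩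
    exact trace_bound A B U ((frobNorm_eq_one_iff U).mp hUn)
  have hbb : BddBelow (Eset A B) := by
    refine ⟨-c, fun t ht => ?_⟩
    have := (abs_le.mp (hbdd t ht)).1
    linarith
  have hba : BddAbove (Eset A B) := ⟨c, fun t ht => (abs_le.mp (hbdd t ht)).2⟩
  exact ⟨csInf_le_csInf hbb hne hsub, csSup_le_csSup hba hne hsub⟩
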